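/- Let Σ be the symmetric traceless 3×3 matrix with Σ₁₁=−2Σ₊, Σ₂₂=Σ₊+√3Σ₋, Σ₃₃=Σ₊−√3Σ₋, Σ₂₃=Σ₃₂=√3Σ×, Σ₁₂=Σ₂₁=√3Σ₂, Σ₁₃=Σ₃₁=√3Σ₃, with Σ₂=0. Then Σ is axially symmetric with symmetry axis V=(V₁,0,V₃) (V ≠ 0) — i.e., V is an eigenvector of Σ and the orthogonal complement of V is an eigenspace — if and only if Σ×=0, 2Σ₋V₁+Σ₃V₃=0, and Σ₃V₁+(Σ₋+√3Σ₊)V₃=0. -/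
import Mathlib

open Matrix

lemma aux_cancel {V1 V3 a : ℝ} (hV : V1 ≠ 0 ∨ V3 ≠ 0)
    (h1 : V1 * a = 0) (h3 : V3 * a = 0) : a = 0 := by
  rcases hV with h | h
  · exact (mul_eq_zero.1 h1).resolve_left h
  · exact (mul_eq_zero.1 h3).resolve_left h

theorem stmt13 (Sp Sm Sx S3 V1 V3 : ℝ) (hV : V1 ≠ 0 ∨ V3 ≠ 0) :
    (∃ lam mu : ℝ,
      Matrix.mulVec
        (!![-2 * Sp, 0, Real.sqrt 3 * S3;
            0, Sp + Real.sqrt 3 * Sm, Real.sqrt 3 * Sx;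
            Real.sqrt 3 * S3, Real.sqrt 3 * Sx, Sp - Real.sqrt 3 * Sm])
        ![V1, 0, V3] = lam • ![V1, 0, V3] ∧
      ∀ w : Fin 3 → ℝ, ![V1, 0, V3] ⬝ᵥ w = 0 →
        Matrix.mulVec
          (!![-2 * Sp, 0, Real.sqrt 3 * S3;
              0, Sp + Real.sqrt 3 * Sm, Real.sqrt 3 * Sx;
              Real.sqrt 3 * S3, Real.sqrt 3 * Sx, Sp - Real.sqrt 3 * Sm]) w = mu • w)
    ↔
    (Sx = 0 ∧ 2 * Sm * V1 + S3 * V3 = 0 ∧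
      S3 * V1 + (Sm + Real.sqrt 3 * Sp) * V3 = 0) := by
  set s := Real.sqrt 3 with hs
  have hs2 : s * s = 3 := Real.mul_self_sqrt (by norm_num)
  have hs0 : s ≠ 0 := by
    intro h; rw [h] at hs2; norm_num at hs2
  constructor
  · rintro ⟨lam, mu, hV', hplane⟩
    have h2 := hplane ![0, 1, 0] (by
      simp [dotProduct, Fin.sum_univ_three])
    have h3 := hplane ![-V3, 0, V1] (by
      simp [dotProduct, Fin.sum_univ_three]; ring)
    have e21 := congrFun h2 1
    have e22 := congrFun h2 2
    have e30 := congrFun h3 0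
    have e32 := congrFun h3 2
    simp [Matrix.mulVec, dotProduct, Fin.sum_univ_three] at e21 e22 e30 e32
    have hSx : Sx = 0 := e22.resolve_left hs0
    have hmu : mu = Sp + s * Sm := by linarith [e21]
    subst hmu
    refine ⟨hSx, ?_, ?_⟩
    · have : s * (2 * Sm * V1 + S3 * V3) = 0 := by linear_combination -e32
      exact (mul_eq_zero.1 this).resolve_left hs0
    · have : s * (S3 * V1 + (Sm + s * Sp) * V3) = 0 := by
        linear_combination e30 + Sp * V3 * hs2
      exact (mul_eq_zero.1 this).resolve_left hs0
  · rintro ⟨hSx, h2, h3⟩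
    refine ⟨-2 * (Sp + s * Sm), Sp + s * Sm, ?_, ?_⟩
    · funext i
      fin_cases i
      · simp [Matrix.mulVec, dotProduct, Fin.sum_univ_three, hSx]
        linear_combination s * h2
      · simp [Matrix.mulVec, dotProduct, Fin.sum_univ_three, hSx]
      · simp [Matrix.mulVec, dotProduct, Fin.sum_univ_three, hSx]
        linear_combination s * h3 - Sp * V3 * hs2
    · intro w hw
      simp [dotProduct, Fin.sum_univ_three] at hw
      funext i
      fin_cases i
      · have k : -2 * Sp * w 0 + s * S3 * w 2 - (Sp + s * Sm) * w 0 = 0 :=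
          aux_cancel hV
            (by linear_combination s * (w 2) * h3 - Sp * V3 * (w 2) * hs2
                  - (3 * Sp + s * Sm) * hw)
            (by linear_combination -(s * (w 0)) * h3 + s * S3 * hw
                  + Sp * V3 * (w 0) * hs2)
        simp [Matrix.mulVec, dotProduct, Fin.sum_univ_three, hSx]
        linear_combination k
      · simp [Matrix.mulVec, dotProduct, Fin.sum_univ_three, hSx]
      · have k : s * S3 * w 0 + (Sp - s * Sm) * w 2 - (Sp + s * Sm) * w 2 = 0 :=
          aux_cancel hV
            (by linear_combination s * S3 * hw - s * (w 2) * h2)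
            (by linear_combination s * (w 0) * h2 - 2 * s * Sm * hw)
        simp [Matrix.mulVec, dotProduct, Fin.sum_univ_three, hSx]
        linear_combination k
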